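/- arXiv:1110.2347 — 2 statements merged into one kernel-verified Lean document; each statement's English description precedes it below -/
import Mathlib

section
/- Let (O,⋆) be a graded pre-Lie system, i.e. a (Z,N)-bigraded R-module with composition maps ⋆_k: O^n_i ⊗ O^m_j → O^{n+m−1}_{i+j} for 1 ≤ k ≤ n satisfying f⋆_u(g⋆_v h) = (f⋆_u g)⋆_{v+u−1} h and (f⋆_u g)⋆_{v+m−1} h = (−1)^{jl}(f⋆_v h)⋆_u g for u < v (where g ∈ O^m_j, h ∈ O^p_l). Then the maps f ∘_k g := (−1)^{(j+m−1)(n−1)+(m−1)(k−1)} f ⋆_k g form a weight graded pre-Lie system, i.e. they satisfy f∘_u(g∘_v h) = (f∘_u g)∘_{v+u−1} h and (f∘_u g)∘_{v+m−1} h = (−1)^{(j+m−1)(l+p−1)}(f∘_v h)∘_u g for u < v. -/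
noncomputable section

/-- The sign `(-1)^e` for an integer exponent `e`. -/
def pm (e : ℤ) : ℤ := ((Int.negOnePow e : ℤˣ) : ℤ)

/-- The sign `(-1)^{(j+m-1)(n-1)+(m-1)(k-1)}` turning the graded composition `⋆ₖ`
(for `f` of arity `n` and `g` of arity `m`, degree `j`) into the weight graded one. -/
def cS (n m : ℕ) (j : ℤ) (k : ℕ) : ℤ :=
  pm ((j + (m : ℤ) - 1) * ((n : ℤ) - 1) + ((m : ℤ) - 1) * ((k : ℤ) - 1))

lemma pm_mul (a b : ℤ) : pm a * pm b = pm (a + b) := by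
  rw [pm, pm, pm, Int.negOnePow_add]; push_cast; ring

lemma pm_congr (a b : ℤ) (k : ℤ) (hk : a = b + 2 * k) : pm a = pm b := by
  subst hk
  rw [pm, pm, Int.negOnePow_add, Int.negOnePow_two_mul]; push_cast; ring

/-- If `(O,⋆)` is a graded pre-Lie system (a `(ℤ,ℕ)`-bigraded `R`-module with bilinear
compositions `⋆ₖ : Oⁿᵢ ⊗ Oᵐⱼ → O^{n+m-1}_{i+j}`, `1 ≤ k ≤ n`, satisfying the two pre-Lie
system relations with signs given by degrees), then the maps
`f ∘ₖ g := (-1)^{(j+m-1)(n-1)+(m-1)(k-1)} f ⋆ₖ g` form a weight graded pre-Lie system,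
i.e. satisfy the two relations with signs given by weights. -/
theorem gradedPreLieSystem_to_weightGraded
    {R M : Type*} [CommRing R] [AddCommGroup M] [Module R M]
    (H : ℕ → ℤ → Submodule R M)
    (hdec : DirectSum.IsInternal fun p : ℕ × ℤ => H p.1 p.2)
    (comp : ℕ → M →ₗ[R] M →ₗ[R] M)
    (hgr : ∀ (n m : ℕ) (i j : ℤ) (k : ℕ), 1 ≤ k → k ≤ n →
      ∀ f ∈ H n i, ∀ g ∈ H m j, comp k f g ∈ H (n + m - 1) (i + j))
    (hax1 : ∀ (n m p : ℕ) (i j l : ℤ) (u v : ℕ), 1 ≤ u → u ≤ n → 1 ≤ v → v ≤ m →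
      ∀ f ∈ H n i, ∀ g ∈ H m j, ∀ h ∈ H p l,
        comp u f (comp v g h) = comp (v + u - 1) (comp u f g) h)
    (hax2 : ∀ (n m p : ℕ) (i j l : ℤ) (u v : ℕ), 1 ≤ u → u < v → v ≤ n →
      ∀ f ∈ H n i, ∀ g ∈ H m j, ∀ h ∈ H p l,
        comp (v + m - 1) (comp u f g) h = pm (j * l) • comp u (comp v f h) g) :
    (∀ (n m p : ℕ) (i j l : ℤ) (u v : ℕ), 1 ≤ u → u ≤ n → 1 ≤ v → v ≤ m →
      ∀ f ∈ H n i, ∀ g ∈ H m j, ∀ h ∈ H p l,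
        cS n (m + p - 1) (j + l) u • comp u f (cS m p l v • comp v g h)
          = cS (n + m - 1) p l (v + u - 1) •
              comp (v + u - 1) (cS n m j u • comp u f g) h) ∧
    (∀ (n m p : ℕ) (i j l : ℤ) (u v : ℕ), 1 ≤ u → u < v → v ≤ n →
      ∀ f ∈ H n i, ∀ g ∈ H m j, ∀ h ∈ H p l,
        cS (n + m - 1) p l (v + m - 1) • comp (v + m - 1) (cS n m j u • comp u f g) h
          = pm ((j + (m : ℤ) - 1) * (l + (p : ℤ) - 1)) •
              (cS (n + p - 1) m j u • comp u (cS n p l v • comp v f h) g)) := by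
  constructor
  · intro n m p i j l u v hu hun hv hvm f hf g hg h hh
    have key := hax1 n m p i j l u v hu hun hv hvm f hf g hg h hh
    simp only [map_zsmul, LinearMap.smul_apply, smul_smul, key]
    congr 1
    have hm : 1 ≤ m := hv.trans hvm
    have hn : 1 ≤ n := hu.trans hun
    have c1 : ((m + p - 1 : ℕ) : ℤ) = (m : ℤ) + p - 1 := by omega
    have c2 : ((n + m - 1 : ℕ) : ℤ) = (n : ℤ) + m - 1 := by omega
    have c3 : ((v + u - 1 : ℕ) : ℤ) = (v : ℤ) + u - 1 := by omega
    rw [cS, cS, cS, cS, pm_mul, pm_mul, c1, c2, c3]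
    apply pm_congr _ _ 0
    ring
  · intro n m p i j l u v hu huv hvn f hf g hg h hh
    have key := hax2 n m p i j l u v hu huv hvn f hf g hg h hh
    simp only [map_zsmul, LinearMap.smul_apply, smul_smul, key]
    congr 1
    have hn : 1 ≤ n := hu.trans (huv.le.trans hvn)
    have c1 : ((n + m - 1 : ℕ) : ℤ) = (n : ℤ) + m - 1 := by omega
    have c2 : ((v + m - 1 : ℕ) : ℤ) = (v : ℤ) + m - 1 := by omega
    have c3 : ((n + p - 1 : ℕ) : ℤ) = (n : ℤ) + p - 1 := by omega
    rw [cS, cS, cS, cS, pm_mul, pm_mul, pm_mul, pm_mul, c1, c2, c3]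
    apply pm_congr _ _ (j - j * p)
    ring
end
end

section
/- Let (O,∘) be a weight graded pre-Lie system with total product f∘g = Σ_k f∘_k g as in Corollary of the construction, and let g ∈ O have odd weight. Then for every f ∈ O one has (f∘g)∘g = f∘(g∘g), without any assumption on 2-torsion of the underlying R-modules. -/
noncomputable section

/-- The total product `f ∘ g = ∑_{k=1}^{n} f ∘ₖ g` associated to a family of partial
compositions, for `f` of arity `n`. -/
def tcirc {R M : Type*} [CommRing R] [AddCommGroup M] [Module R M]
    (comp : ℕ → M →ₗ[R] M →ₗ[R] M) (n : ℕ) (f g : M) : M :=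
  ∑ k ∈ Finset.Icc 1 n, comp k f g

/-- In a weight graded pre-Lie system `(O,∘)` over an arbitrary commutative ring `R` (no
assumption on 2-torsion), if `g` has odd weight then `(f∘g)∘g = f∘(g∘g)` for every `f`,
where `∘` is the total composition `f ∘ g = ∑_k f ∘ₖ g`. -/
theorem weightGradedPreLieSystem_odd_square
    {R M : Type*} [CommRing R] [AddCommGroup M] [Module R M]
    (H : ℕ → ℤ → Submodule R M)
    (hdec : DirectSum.IsInternal fun p : ℕ × ℤ => H p.1 p.2)
    (comp : ℕ → M →ₗ[R] M →ₗ[R] M)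
    (hgr : ∀ (n m : ℕ) (i j : ℤ) (k : ℕ), 1 ≤ k → k ≤ n →
      ∀ f ∈ H n i, ∀ g ∈ H m j, comp k f g ∈ H (n + m - 1) (i + j))
    (hax1 : ∀ (n m p : ℕ) (i j l : ℤ) (u v : ℕ), 1 ≤ u → u ≤ n → 1 ≤ v → v ≤ m →
      ∀ f ∈ H n i, ∀ g ∈ H m j, ∀ h ∈ H p l,
        comp u f (comp v g h) = comp (v + u - 1) (comp u f g) h)
    (hax2 : ∀ (n m p : ℕ) (i j l : ℤ) (u v : ℕ), 1 ≤ u → u < v → v ≤ n →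
      ∀ f ∈ H n i, ∀ g ∈ H m j, ∀ h ∈ H p l,
        comp (v + m - 1) (comp u f g) h
          = pm ((j + (m : ℤ) - 1) * (l + (p : ℤ) - 1)) • comp u (comp v f h) g) :
    ∀ (n m : ℕ) (i j : ℤ), Odd (j + (m : ℤ) - 1) →
      ∀ f ∈ H n i, ∀ g ∈ H m j,
        tcirc comp (n + m - 1) (tcirc comp n f g) g
          = tcirc comp n f (tcirc comp m g g) := by
  intro n m i j hodd f hf g hg
  have hsign : pm ((j + (m : ℤ) - 1) * (j + (m : ℤ) - 1)) = -1 := by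
    have h : Odd ((j + (m : ℤ) - 1) * (j + (m : ℤ) - 1)) := hodd.mul hodd
    simp [pm, Int.negOnePow_odd _ h]
  have key : ∀ u v : ℕ, 1 ≤ u → u < v → v ≤ n →
      comp (v + m - 1) (comp u f g) g = - comp u (comp v f g) g := by
    intro u v hu huv hv
    rw [hax2 n m m i j j u v hu huv hv f hf g hg g hg, hsign, neg_smul, one_smul]
  set T : ℕ → ℕ → M := fun u k => comp k (comp u f g) g with hT
  -- LHS as a double sum
  have lhs1 : tcirc comp (n + m - 1) (tcirc comp n f g) g
      = ∑ u ∈ Finset.Icc 1 n, ∑ k ∈ Finset.Icc 1 (n + m - 1), T u k := by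
    rw [tcirc, tcirc]
    have h1 : ∀ k ∈ Finset.Icc 1 (n + m - 1),
        comp k (∑ u ∈ Finset.Icc 1 n, comp u f g) g = ∑ u ∈ Finset.Icc 1 n, T u k := by
      intro k _
      simp [hT, map_sum, LinearMap.coe_sum, Finset.sum_apply]
    rw [Finset.sum_congr rfl h1, Finset.sum_comm]
  -- RHS as a double sum
  have rhs1 : tcirc comp n f (tcirc comp m g g)
      = ∑ u ∈ Finset.Icc 1 n, ∑ k ∈ Finset.Ioc (u - 1) (u + m - 1), T u k := by
    rw [tcirc, tcirc]
    refine Finset.sum_congr rfl fun u hu => ?_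
    simp only [Finset.mem_Icc] at hu
    rw [map_sum]
    refine Finset.sum_nbij' (fun v => v + u - 1) (fun k => k - u + 1)
      (fun v hv => ?_) (fun k hk => ?_) (fun v hv => ?_) (fun k hk => ?_) (fun v hv => ?_)
    · simp only [Finset.mem_Icc] at hv; simp only [Finset.mem_Ioc]; omega
    · simp only [Finset.mem_Ioc] at hk; simp only [Finset.mem_Icc]; omega
    · simp only [Finset.mem_Icc] at hv; show v + u - 1 - u + 1 = v; omega
    · simp only [Finset.mem_Ioc] at hk; show k - u + 1 + u - 1 = k; omega
    · simp only [Finset.mem_Icc] at hv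
      exact hax1 n m m i j j u v hu.1 hu.2 hv.1 hv.2 f hf g hg g hg
  rw [lhs1, rhs1]
  -- split the inner sum of the LHS into three pieces
  have split : ∀ u ∈ Finset.Icc 1 n,
      ∑ k ∈ Finset.Icc 1 (n + m - 1), T u k
        = (∑ k ∈ Finset.Ioc 0 (u - 1), T u k)
          + (∑ k ∈ Finset.Ioc (u - 1) (u + m - 1), T u k)
          + ∑ k ∈ Finset.Ioc (u + m - 1) (n + m - 1), T u k := by
    intro u hu
    simp only [Finset.mem_Icc] at hu
    have h1 : (0 : ℕ) ≤ u - 1 := Nat.zero_le _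
    have h2 : u - 1 ≤ u + m - 1 := by omega
    have h3 : u + m - 1 ≤ n + m - 1 := by omega
    have hset : Finset.Icc 1 (n + m - 1) = Finset.Ioc 0 (n + m - 1) := by
      ext k; simp only [Finset.mem_Icc, Finset.mem_Ioc]; omega
    rw [hset, Finset.sum_Ioc_consecutive _ h1 h2,
      Finset.sum_Ioc_consecutive _ (le_trans h1 h2) h3]
  rw [Finset.sum_congr rfl split]
  simp only [Finset.sum_add_distrib]
  -- third piece equals minus the first piece (after swapping)
  have hC : ∀ u ∈ Finset.Icc 1 n,
      ∑ k ∈ Finset.Ioc (u + m - 1) (n + m - 1), T u k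
        = - ∑ v ∈ Finset.Ioc u n, comp u (comp v f g) g := by
    intro u hu
    simp only [Finset.mem_Icc] at hu
    rw [← Finset.sum_neg_distrib]
    refine Finset.sum_nbij' (fun k => k - m + 1) (fun v => v + m - 1)
      (fun k hk => ?_) (fun v hv => ?_) (fun k hk => ?_) (fun v hv => ?_) (fun k hk => ?_)
    · simp only [Finset.mem_Ioc] at hk ⊢; omega
    · simp only [Finset.mem_Ioc] at hv ⊢; omega
    · simp only [Finset.mem_Ioc] at hk; show k - m + 1 + m - 1 = k; omega
    · simp only [Finset.mem_Ioc] at hv; show v + m - 1 - m + 1 = v; omega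
    · simp only [Finset.mem_Ioc] at hk
      have hkeq : (k - m + 1) + m - 1 = k := by omega
      show T u k = -(comp u (comp (k - m + 1) f g) g)
      rw [← key u (k - m + 1) hu.1 (by omega) (by omega), hT]
      show comp k (comp u f g) g = comp ((k - m + 1) + m - 1) (comp u f g) g
      rw [hkeq]
  rw [Finset.sum_congr rfl hC, Finset.sum_neg_distrib]
  -- swap the double sum of the first piece
  have hA : ∑ u ∈ Finset.Icc 1 n, ∑ k ∈ Finset.Ioc 0 (u - 1), T u k
      = ∑ a ∈ Finset.Icc 1 n, ∑ b ∈ Finset.Ioc a n, comp a (comp b f g) g := by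
    rw [Finset.sum_comm' (s := Finset.Icc 1 n) (t := fun u => Finset.Ioc 0 (u - 1))
      (t' := Finset.Icc 1 n) (s' := fun k => Finset.Ioc k n) ?_]
    intro u k
    simp only [Finset.mem_Icc, Finset.mem_Ioc]
    omega
  rw [hA]
  abel
end
end
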